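/- Let μ be a graph parameter on finite simple graphs such that: (a) μ is monotone under induced subgraphs up to +1, i.e., μ(G) ≤ μ(G - v) + 1 for every vertex v; (b) if v is adjacent to all other vertices of G and G has at least one edge, then μ(G) = μ(G - v) + 1. Let G be an n-vertex graph with |E(G)| > μ(G)·n - C(μ(G)+1, 2), such that every one-vertex-deleted induced subgraph G - x satisfies |E(G-x)| ≤ μ(G-x)·(n-1) - C(μ(G-x)+1, 2). If u is a vertex of G of degree n-1, then a contradiction follows; in particular, the maximum degree of G is at most n-2. -/

import Mathlib

open Finset

lemma edge_count_split (V : Type) [Fintype V] [DecidableEq V] (G : SimpleGraph V)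
    [DecidableRel G.Adj] (u : V) :
    G.edgeSet.ncard = (G.induce ({u}ᶜ : Set V)).edgeSet.ncard + G.degree u := by
  classical
  have h1 : G.edgeSet.ncard = G.edgeFinset.card := by
    rw [← SimpleGraph.coe_edgeFinset, Set.ncard_coe_finset]
  have h2 : (G.induce ({u}ᶜ : Set V)).edgeSet.ncard
      = (G.induce ({u}ᶜ : Set V)).edgeFinset.card := by
    rw [← SimpleGraph.coe_edgeFinset, Set.ncard_coe_finset]
  rw [h1, h2, ← SimpleGraph.card_incidenceFinset_eq_degree]
  have himg : (G.induce ({u}ᶜ : Set V)).edgeFinset.image (Sym2.map Subtype.val)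
      = G.edgeFinset \ G.incidenceFinset u := by
    ext e
    simp only [Finset.mem_image, Finset.mem_sdiff, SimpleGraph.mem_edgeFinset,
      SimpleGraph.mem_incidenceFinset]
    constructor
    · rintro ⟨f, hf, rfl⟩
      induction f with
      | h a b =>
        simp only [SimpleGraph.mem_edgeSet, SimpleGraph.comap_adj,
          SimpleGraph.induce_eq_coe_induce_top] at hf ⊢
        refine ⟨?_, ?_⟩
        · exact ((SimpleGraph.mem_edgeSet _).1 hf).2.2
        · intro hmem
          rw [SimpleGraph.incidenceSet] at hmem
          have hu : u ∈ Sym2.map Subtype.val s(a, b) := hmem.2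
          simp only [Sym2.map_pair_eq, Sym2.mem_iff] at hu
          rcases hu with hu | hu
          · exact a.2 (by simp [hu])
          · exact b.2 (by simp [hu])
    · rintro ⟨he, hni⟩
      induction e with
      | h a b =>
        have ha : a ≠ u := by
          intro h; exact hni ⟨he, by simp [h]⟩
        have hb : b ≠ u := by
          intro h; exact hni ⟨he, by simp [h]⟩
        refine ⟨s(⟨a, by simp [ha]⟩, ⟨b, by simp [hb]⟩), ?_, by simp⟩
        simpa using he
  have hsub : G.incidenceFinset u ⊆ G.edgeFinset := by
    intro e he
    rw [SimpleGraph.mem_incidenceFinset] at he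
    exact SimpleGraph.mem_edgeFinset.2 he.1
  have hinj : Function.Injective (Sym2.map (Subtype.val : ({u}ᶜ : Set V) → V)) :=
    Sym2.map.injective Subtype.val_injective
  calc G.edgeFinset.card
      = (G.edgeFinset \ G.incidenceFinset u).card + (G.incidenceFinset u).card := by
        rw [Finset.card_sdiff_add_card_eq_card hsub]
    _ = (G.induce ({u}ᶜ : Set V)).edgeFinset.card + (G.incidenceFinset u).card := by
        rw [← himg, Finset.card_image_of_injective _ hinj]

theorem stmt_4
    (μ : ∀ (V : Type) [Fintype V] [DecidableEq V], SimpleGraph V → ℕ)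
    (hA : ∀ (V : Type) [Fintype V] [DecidableEq V] (G : SimpleGraph V) (v : V),
      μ V G ≤ μ ↥({v}ᶜ : Set V) (G.induce {v}ᶜ) + 1)
    (hB : ∀ (V : Type) [Fintype V] [DecidableEq V] (G : SimpleGraph V) (v : V),
      (∀ w : V, w ≠ v → G.Adj v w) → G.edgeSet.Nonempty →
      μ V G = μ ↥({v}ᶜ : Set V) (G.induce {v}ᶜ) + 1)
    (V : Type) [Fintype V] [DecidableEq V] (G : SimpleGraph V)
    [DecidableRel G.Adj] (n : ℕ) (hn : Fintype.card V = n)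
    (hE : (G.edgeSet.ncard : ℤ) > μ V G * n - ((μ V G + 1).choose 2 : ℕ))
    (hdel : ∀ x : V, ((G.induce ({x}ᶜ : Set V)).edgeSet.ncard : ℤ) ≤
      μ ↥({x}ᶜ : Set V) (G.induce {x}ᶜ) * (n - 1) -
        ((μ ↥({x}ᶜ : Set V) (G.induce {x}ᶜ) + 1).choose 2 : ℕ)) :
    ∀ u : V, G.degree u < n - 1 := by
  intro u
  by_contra h
  push_neg at h
  have hn1 : 1 ≤ n := by
    rw [← hn]
    exact Fintype.card_pos_iff.2 ⟨u⟩
  have hdle : G.degree u ≤ n - 1 := by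
    have := G.degree_lt_card_verts u
    omega
  have hdeg : G.degree u = n - 1 := le_antisymm hdle h
  -- u is adjacent to every other vertex
  have hadj : ∀ w : V, w ≠ u → G.Adj u w := by
    intro w hw
    have hsub : G.neighborFinset u ⊆ Finset.univ.erase u := by
      intro x hx
      rw [SimpleGraph.mem_neighborFinset] at hx
      exact Finset.mem_erase.2 ⟨hx.ne', Finset.mem_univ x⟩
    have hcard : (Finset.univ.erase u).card ≤ (G.neighborFinset u).card := by
      rw [SimpleGraph.card_neighborFinset_eq_degree, hdeg, Finset.card_erase_of_mem
        (Finset.mem_univ u), Finset.card_univ, hn]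
    have heq := Finset.eq_of_subset_of_card_le hsub hcard
    have : w ∈ G.neighborFinset u := by
      rw [heq]; exact Finset.mem_erase.2 ⟨hw, Finset.mem_univ w⟩
    rw [SimpleGraph.mem_neighborFinset] at this
    exact this
  set μ' := μ ↥({u}ᶜ : Set V) (G.induce ({u}ᶜ : Set V)) with hμ'
  have hcount := edge_count_split V G u
  have hdelu := hdel u
  rcases Nat.lt_or_ge n 2 with h2 | h2
  · -- n = 1 : no edges
    have hn1' : n = 1 := by omega
    have hempty : G.edgeSet = ∅ := by
      ext e
      induction e with
      | h a b =>
        simp only [SimpleGraph.mem_edgeSet, Set.mem_empty_iff_false, iff_false]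
        intro hab
        have : a = b := by
          have : Fintype.card V ≤ 1 := by omega
          exact Fintype.card_le_one_iff.1 this a b
        exact hab.ne this
    have hzero : G.edgeSet.ncard = 0 := by rw [hempty]; simp
    have hμ'0 : μ' = 0 := by
      have hle : ((μ' + 1).choose 2 : ℤ) ≤ μ' * (n - 1) - (G.induce ({u}ᶜ : Set V)).edgeSet.ncard := by
        linarith
      rw [hn1'] at hle
      have : ((μ' + 1).choose 2 : ℤ) ≤ 0 := by
        have h0 : ((G.induce ({u}ᶜ : Set V)).edgeSet.ncard : ℤ) ≥ 0 := Int.ofNat_nonneg _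
        push_cast at hle ⊢
        linarith
      have hc0 : ((μ' + 1).choose 2 : ℤ) = 0 := le_antisymm this (Int.ofNat_nonneg _)
      have hc0' : (μ' + 1).choose 2 = 0 := by exact_mod_cast hc0
      have := Nat.choose_eq_zero_iff.1 hc0'
      omega
    have hμle : μ V G ≤ 1 := by
      have := hA V G u
      rw [← hμ', hμ'0] at this
      omega
    rw [hzero, hn1'] at hE
    interval_cases h : μ V G <;> simp [Nat.choose] at hE
  · -- n ≥ 2 : G has an edge and we use hB
    have hne : G.edgeSet.Nonempty := by
      obtain ⟨w, hw⟩ := Finset.exists_mem_ne (by rw [Finset.card_univ, hn]; omega) u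
      exact ⟨s(u, w), hadj w hw.2⟩
    have hμeq : μ V G = μ' + 1 := hB V G u hadj hne
    have hchoose : (μ' + 2).choose 2 = (μ' + 1).choose 2 + (μ' + 1) := by
      rw [Nat.choose_succ_succ]
      simp [Nat.choose_one_right, Nat.add_comm]
    rw [hμeq, hcount] at hE
    have hkey : ((μ' : ℤ) + 1) * n - ((μ' + 2).choose 2 : ℕ)
        = μ' * (n - 1) - ((μ' + 1).choose 2 : ℕ) + (n - 1) := by
      rw [hchoose]
      push_cast
      ring
    have hcast : ((n : ℤ) - 1) = ((n - 1 : ℕ) : ℤ) := by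
      have : (1 : ℕ) ≤ n := hn1
      push_cast [this]
      ring
    have hE' : ((G.induce ({u}ᶜ : Set V)).edgeSet.ncard : ℤ) + (G.degree u : ℤ)
        > (μ' + 1) * n - ((μ' + 2).choose 2 : ℕ) := by
      push_cast at hE ⊢
      convert hE using 2 <;> push_cast <;> ring
    rw [hkey, hdeg] at hE'
    rw [← hμ'] at hdelu
    have hc2 : ((n - 1 : ℕ) : ℤ) = (n : ℤ) - 1 := by omega
    rw [hc2] at hE'
    linarith [hdelu, hE']
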